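/- Let A : ℕ → S be an allocation in which every symbol of S occurs infinitely often. Then the asymmetric-numeral-system decoding inverts the encoding and vice versa: for all s ∈ S and n ∈ ℕ, D(C(s,n)) = (s, n); and for all m ∈ ℕ, writing D(m) = (s, n), one has C(s, n) = m (equivalently, select(A[m], rank(A[m], m)) = m). -/
import Mathlib


open Finset

/-- `rnk A s n` is the number of occurrences of `s` among `A 0, …, A n`. -/
def rnk {S : Type*} [DecidableEq S] (A : ℕ → S) (s : S) (n : ℕ) : ℕ :=
  ((Finset.range (n + 1)).filter fun k => A k = s).card

/-- `sel A s n` is the index of the `n`-th occurrence of `s` in `A`. -/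
noncomputable def sel {S : Type*} [DecidableEq S] (A : ℕ → S) (s : S) (n : ℕ) : ℕ :=
  sInf {k : ℕ | n ≤ rnk A s k}

/-- Asymmetric-numeral-system encoding. -/
noncomputable def ansEnc {S : Type*} [DecidableEq S] (A : ℕ → S) (s : S) (n : ℕ) : ℕ :=
  sel A s (n + 1)

/-- Asymmetric-numeral-system decoding. -/
def ansDec {S : Type*} [DecidableEq S] (A : ℕ → S) (m : ℕ) : S × ℕ :=
  (A m, rnk A (A m) m - 1)

lemma rnk_succ {S : Type*} [DecidableEq S] (A : ℕ → S) (s : S) (k : ℕ) :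
    rnk A s (k + 1) = rnk A s k + if A (k + 1) = s then 1 else 0 := by
  unfold rnk
  rw [Finset.range_add_one, Finset.filter_insert]
  split
  · rw [Finset.card_insert_of_notMem (by simp)]
  · simp

lemma rnk_mono {S : Type*} [DecidableEq S] (A : ℕ → S) (s : S) :
    Monotone (rnk A s) := by
  apply monotone_nat_of_le_succ
  intro k
  rw [rnk_succ]
  omega

lemma rnk_zero {S : Type*} [DecidableEq S] (A : ℕ → S) (s : S) :
    rnk A s 0 = if A 0 = s then 1 else 0 := by
  unfold rnk
  rw [show (0:ℕ)+1 = 1 from rfl, Finset.range_one, Finset.filter_singleton]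
  split <;> simp

lemma rnk_unbounded {S : Type*} [DecidableEq S] (A : ℕ → S)
    (hA : ∀ (s : S) (N : ℕ), ∃ k : ℕ, N ≤ k ∧ A k = s) (s : S) (n : ℕ) :
    ∃ k, n ≤ rnk A s k := by
  induction n with
  | zero => exact ⟨0, Nat.zero_le _⟩
  | succ n ih =>
    obtain ⟨k, hk⟩ := ih
    obtain ⟨k', hk', hAk'⟩ := hA s (k + 1)
    obtain ⟨j, rfl⟩ : ∃ j, k' = j + 1 := ⟨k' - 1, by omega⟩
    refine ⟨j + 1, ?_⟩
    have h1 : rnk A s k ≤ rnk A s j := rnk_mono A s (by omega)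
    rw [rnk_succ, if_pos hAk']
    omega

lemma sel_spec {S : Type*} [DecidableEq S] (A : ℕ → S)
    (hA : ∀ (s : S) (N : ℕ), ∃ k : ℕ, N ≤ k ∧ A k = s) (s : S) (n : ℕ) :
    A (sel A s (n + 1)) = s ∧ rnk A s (sel A s (n + 1)) = n + 1 := by
  have hne : {k : ℕ | n + 1 ≤ rnk A s k}.Nonempty := rnk_unbounded A hA s (n + 1)
  have hmem : n + 1 ≤ rnk A s (sel A s (n + 1)) := Nat.sInf_mem hne
  have hlt : ∀ k < sel A s (n + 1), rnk A s k < n + 1 := by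
    intro k hk
    by_contra h
    have h' : sel A s (n + 1) ≤ k := Nat.sInf_le (Nat.not_lt.mp h)
    omega
  rcases Nat.eq_zero_or_pos (sel A s (n + 1)) with h0 | hpos
  · rw [h0] at hmem ⊢
    rw [rnk_zero] at hmem ⊢
    split at hmem <;> [skip; omega]
    constructor
    · assumption
    · simp_all
  · obtain ⟨j, hj⟩ : ∃ j, sel A s (n + 1) = j + 1 := ⟨sel A s (n + 1) - 1, by omega⟩
    have hj' : rnk A s j < n + 1 := hlt j (by omega)
    rw [hj] at hmem ⊢
    rw [rnk_succ] at hmem ⊢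
    split at hmem
    · constructor
      · assumption
      · split <;> omega
    · omega

theorem stmt_15 {S : Type*} [Fintype S] [DecidableEq S] [Nonempty S]
    (A : ℕ → S) (hA : ∀ (s : S) (N : ℕ), ∃ k : ℕ, N ≤ k ∧ A k = s) :
    (∀ (s : S) (n : ℕ), ansDec A (ansEnc A s n) = (s, n)) ∧
    (∀ m : ℕ, ansEnc A (ansDec A m).1 (ansDec A m).2 = m) := by
  constructor
  · intro s n
    obtain ⟨h1, h2⟩ := sel_spec A hA s n
    simp only [ansDec, ansEnc] at *
    rw [h1, h2]
    simp
  · intro m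
    set s := A m with hs
    have hr : 1 ≤ rnk A s m := by
      have : m ∈ (Finset.range (m + 1)).filter fun k => A k = s := by
        simp [hs]
      unfold rnk
      exact Finset.card_pos.mpr ⟨m, this⟩
    have hlt : ∀ k < m, rnk A s k < rnk A s m := by
      intro k hk
      obtain ⟨j, rfl⟩ : ∃ j, m = j + 1 := ⟨m - 1, by omega⟩
      have h1 : rnk A s k ≤ rnk A s j := rnk_mono A s (by omega)
      have h2 : rnk A s (j + 1) = rnk A s j + 1 := by
        rw [rnk_succ, if_pos hs.symm]
      omega
    simp only [ansDec, ansEnc]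
    rw [Nat.sub_add_cancel hr]
    have hmem : m ∈ {k : ℕ | rnk A s m ≤ rnk A s k} := by simp
    refine le_antisymm (Nat.sInf_le hmem) ?_
    by_contra h
    push_neg at h
    have hin : sel A s (rnk A s m) ∈ {k : ℕ | rnk A s m ≤ rnk A s k} :=
      Nat.sInf_mem ⟨m, hmem⟩
    exact absurd hin (by simpa using Nat.not_le.mpr (hlt _ h))
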